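/- arXiv:1811.00230 — 4 statements merged into one kernel-verified Lean document; each statement's English description precedes it below -/
import Mathlib

section
/- Let G be a finite k-regular simple graph (k ≥ 1) on v = 2t vertices with t ≥ 1, and let θ_min be the smallest eigenvalue of its adjacency matrix. Then h_G ≤ (k − θ_min)/(2k). -/
open Finset Matrix

/-- `E[S,T]`: the number of ordered pairs `(x, y)` with `x ∈ S`, `y ∈ T` and `x, y` adjacent. -/
def eB {V : Type} [Fintype V] [DecidableEq V] (G : SimpleGraph V) [DecidableRel G.Adj]
    (S T : Finset V) : ℕ :=
  ((S ×ˢ T).filter fun p => G.Adj p.1 p.2).card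

/-- The Cheeger constant of a `k`-regular graph `G`: the infimum of
`E[S,Sᶜ] / (k·|S|)` over nonempty vertex subsets `S` with `2·|S| ≤ |V|`. -/
noncomputable def cheeger {V : Type} [Fintype V] [DecidableEq V] (G : SimpleGraph V)
    [DecidableRel G.Adj] (k : ℕ) : ℝ :=
  sInf {x : ℝ | ∃ S : Finset V, S.Nonempty ∧ 2 * S.card ≤ Fintype.card V ∧
    x = (eB G S Sᶜ : ℝ) / (k * S.card)}

/-- `θ` is an eigenvalue of the adjacency matrix of `G`. -/
def IsAdjEigenvalue {V : Type} [Fintype V] [DecidableEq V] (G : SimpleGraph V)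
    [DecidableRel G.Adj] (θ : ℝ) : Prop :=
  ∃ f : V → ℝ, f ≠ 0 ∧ G.adjMatrix ℝ *ᵥ f = θ • f

/-- `θ` is the second-largest adjacency eigenvalue of the connected `k`-regular graph `G`,
i.e. the largest eigenvalue distinct from the top eigenvalue `k`
(which has multiplicity one for connected graphs). -/
def IsSecondLargestAdjEigenvalue {V : Type} [Fintype V] [DecidableEq V] (G : SimpleGraph V)
    [DecidableRel G.Adj] (k : ℕ) (θ : ℝ) : Prop :=
  IsAdjEigenvalue G θ ∧ θ ≠ (k : ℝ) ∧ ∀ μ : ℝ, IsAdjEigenvalue G μ → μ ≠ (k : ℝ) → μ ≤ θ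


section Aux
set_option linter.unusedSectionVars false

variable {V : Type} [Fintype V] [DecidableEq V] (G : SimpleGraph V) [DecidableRel G.Adj]

lemma adjHerm : (G.adjMatrix ℝ).IsHermitian := by
  rw [Matrix.IsHermitian, Matrix.conjTranspose_eq_transpose_of_trivial]
  exact G.isSymm_adjMatrix

lemma quadForm_ge {θmin : ℝ} (hmin : ∀ μ : ℝ, IsAdjEigenvalue G μ → θmin ≤ μ)
    (x : V → ℝ) : θmin * (x ⬝ᵥ x) ≤ x ⬝ᵥ (G.adjMatrix ℝ *ᵥ x) := by
  set A := G.adjMatrix ℝ with hA'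
  set B := A - θmin • (1 : Matrix V V ℝ) with hB'
  have hB : B.IsHermitian := by
    rw [Matrix.IsHermitian, Matrix.conjTranspose_eq_transpose_of_trivial]
    show (A - θmin • (1 : Matrix V V ℝ))ᵀ = _
    rw [Matrix.transpose_sub, Matrix.transpose_smul, Matrix.transpose_one,
      (G.isSymm_adjMatrix : Aᵀ = A)]
  have hev : ∀ i, 0 ≤ hB.eigenvalues i := by
    intro i
    have hg := hB.mulVec_eigenvectorBasis i
    have hg0 : (⇑(hB.eigenvectorBasis i) : V → ℝ) ≠ 0 := by
      have := hB.eigenvectorBasis.orthonormal.ne_zero i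
      intro h
      exact this (by ext j; exact congrFun h j)
    have hAg : A *ᵥ ⇑(hB.eigenvectorBasis i) =
        (hB.eigenvalues i + θmin) • ⇑(hB.eigenvectorBasis i) := by
      have : A = B + θmin • (1 : Matrix V V ℝ) := by rw [hB', sub_add_cancel]
      rw [this, Matrix.add_mulVec, hg, Matrix.smul_mulVec, Matrix.one_mulVec,
        add_smul]
    have := hmin _ ⟨_, hg0, hAg⟩
    linarith
  have hpsd : B.PosSemidef := hB.posSemidef_iff_eigenvalues_nonneg.mpr hev
  have := hpsd.dotProduct_mulVec_nonneg x
  rw [star_trivial] at this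
  have hBx : B *ᵥ x = A *ᵥ x - θmin • x := by
    rw [hB', Matrix.sub_mulVec, Matrix.smul_mulVec, Matrix.one_mulVec]
  rw [hBx, dotProduct_sub, dotProduct_smul, smul_eq_mul] at this
  linarith

lemma eB_real (S T : Finset V) : (eB G S T : ℝ) =
    ∑ i : V, ∑ j : V, (if i ∈ S then (1:ℝ) else 0) * (if j ∈ T then 1 else 0) *
      (if G.Adj i j then 1 else 0) := by
  have h1 : (eB G S T : ℝ) = ∑ i ∈ S, ∑ j ∈ T, (if G.Adj i j then (1:ℝ) else 0) := by
    rw [eB, Finset.card_filter, Finset.sum_product]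
    push_cast
    rfl
  rw [h1]
  rw [← Finset.univ_inter S, ← Finset.sum_ite_mem]
  refine Finset.sum_congr rfl fun i _ => ?_
  by_cases hi : i ∈ S
  · simp only [hi, if_true]
    rw [← Finset.univ_inter T, ← Finset.sum_ite_mem]
    refine Finset.sum_congr rfl fun j _ => ?_
    by_cases hj : j ∈ T <;> by_cases ha : G.Adj i j <;> simp [hi, hj, ha]
  · simp [hi]

lemma eB_comm (S : Finset V) : eB G S Sᶜ = eB G Sᶜ S := by
  unfold eB
  refine Finset.card_bij' (fun p _ => p.swap) (fun p _ => p.swap) ?_ ?_ ?_ ?_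
  · intro p hp
    simp only [Finset.mem_filter, Finset.mem_product] at hp ⊢
    exact ⟨⟨hp.1.2, hp.1.1⟩, hp.2.symm⟩
  · intro p hp
    simp only [Finset.mem_filter, Finset.mem_product] at hp ⊢
    exact ⟨⟨hp.1.2, hp.1.1⟩, hp.2.symm⟩
  · intro p _; rfl
  · intro p _; rfl

lemma count {k : ℕ} (hreg : G.IsRegularOfDegree k) (S : Finset V) :
    (fun v => if v ∈ S then (1:ℝ) else -1) ⬝ᵥ
      (G.adjMatrix ℝ *ᵥ fun v => if v ∈ S then (1:ℝ) else -1)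
    = (Fintype.card V : ℝ) * k - 4 * eB G S Sᶜ := by
  rw [SimpleGraph.dotProduct_mulVec_adjMatrix]
  have key : ∀ i j : V, (if G.Adj i j then (if i ∈ S then (1:ℝ) else -1) *
      (if j ∈ S then 1 else -1) else 0)
    = (if G.Adj i j then (1:ℝ) else 0)
      - 2 * ((if i ∈ S then (1:ℝ) else 0) * (if j ∈ Sᶜ then 1 else 0) *
        (if G.Adj i j then 1 else 0))
      - 2 * ((if i ∈ Sᶜ then (1:ℝ) else 0) * (if j ∈ S then 1 else 0) *
        (if G.Adj i j then 1 else 0)) := by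
    intro i j
    by_cases h : G.Adj i j <;> by_cases hi : i ∈ S <;> by_cases hj : j ∈ S <;>
      simp [h, hi, hj, Finset.mem_compl] <;> norm_num
  simp only [key]
  have expand : ∀ (f g h : V → V → ℝ),
      ∑ i : V, ∑ j : V, (f i j - 2 * g i j - 2 * h i j)
      = (∑ i : V, ∑ j : V, f i j) - 2 * (∑ i : V, ∑ j : V, g i j)
        - 2 * (∑ i : V, ∑ j : V, h i j) := by
    intro f g h
    simp [Finset.sum_sub_distrib, Finset.mul_sum]
  rw [expand]
  have deg : ∀ i : V, ∑ j : V, (if G.Adj i j then (1:ℝ) else 0) = k := by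
    intro i
    rw [Finset.sum_boole]
    rw [← SimpleGraph.neighborFinset_eq_filter]
    exact_mod_cast hreg i
  rw [Finset.sum_congr rfl fun i _ => deg i]
  rw [← eB_real, ← eB_real, eB_comm]
  simp [Finset.card_univ]
  ring

end Aux

/-- For a finite `k`-regular graph (`k ≥ 1`) on `2t` vertices (`t ≥ 1`) with smallest
adjacency eigenvalue `θmin`, one has `h_G ≤ (k - θmin)/(2k)`. -/
theorem stmt_2 {V : Type} [Fintype V] [DecidableEq V] (G : SimpleGraph V) [DecidableRel G.Adj]
    (k t : ℕ) (hk : 1 ≤ k) (ht : 1 ≤ t) (hcard : Fintype.card V = 2 * t)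
    (hreg : G.IsRegularOfDegree k)
    (θmin : ℝ) (hθ : IsAdjEigenvalue G θmin)
    (hmin : ∀ μ : ℝ, IsAdjEigenvalue G μ → θmin ≤ μ) :
    cheeger G k ≤ ((k : ℝ) - θmin) / (2 * (k : ℝ)) := by
  classical
  have hn : t ≤ (Finset.univ : Finset V).card := by
    rw [Finset.card_univ, hcard]; omega
  obtain ⟨S, -, hScard⟩ := Finset.exists_subset_card_eq hn
  set x : V → ℝ := fun v => if v ∈ S then 1 else -1 with hx
  have hxx : x ⬝ᵥ x = (Fintype.card V : ℝ) := by
    rw [dotProduct]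
    rw [Finset.sum_congr rfl fun v _ => (by by_cases h : v ∈ S <;> simp [hx, h] :
      x v * x v = 1)]
    simp [Finset.card_univ]
  have hquad := quadForm_ge G hmin x
  have hcount := count G hreg S
  rw [hcount, hxx, hcard] at hquad
  push_cast at hquad
  have hk' : (1:ℝ) ≤ (k:ℝ) := by exact_mod_cast hk
  have ht' : (1:ℝ) ≤ (t:ℝ) := by exact_mod_cast ht
  have hbdd : BddBelow {x : ℝ | ∃ S : Finset V, S.Nonempty ∧
      2 * S.card ≤ Fintype.card V ∧ x = (eB G S Sᶜ : ℝ) / (k * S.card)} := by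
    refine ⟨0, fun y hy => ?_⟩
    obtain ⟨T, -, -, rfl⟩ := hy
    positivity
  have hmem : ((eB G S Sᶜ : ℝ) / (k * S.card)) ∈ {x : ℝ | ∃ S : Finset V, S.Nonempty ∧
      2 * S.card ≤ Fintype.card V ∧ x = (eB G S Sᶜ : ℝ) / (k * S.card)} := by
    exact ⟨S, Finset.card_pos.mp (by omega), by rw [hScard, hcard], rfl⟩
  refine le_trans (csInf_le hbdd hmem) ?_
  rw [hScard]
  rw [div_le_div_iff₀ (by positivity) (by positivity)]
  nlinarith [Nat.cast_nonneg (α := ℝ) (eB G S Sᶜ), mul_le_mul_of_nonneg_right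
    (by linarith : 4 * (eB G S Sᶜ : ℝ) ≤ 2 * t * ((k:ℝ) - θmin))
    (by linarith : (0:ℝ) ≤ (k:ℝ))]
end

section
/- Let G be a finite k-regular simple graph (k ≥ 1) on v = 2t + 1 vertices with t ≥ 1, and let θ_min be the smallest eigenvalue of its adjacency matrix. Then h_G ≤ (t+1)·(k − θ_min)/((2t+1)·k). -/
open Finset Matrix

/-- Rayleigh-type bound: the quadratic form of the adjacency matrix is bounded below by
the smallest eigenvalue times the squared norm. -/
lemma rayleigh_lower {V : Type} [Fintype V] [DecidableEq V] (G : SimpleGraph V)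
    [DecidableRel G.Adj] (θmin : ℝ)
    (hmin : ∀ μ : ℝ, IsAdjEigenvalue G μ → θmin ≤ μ) (x : V → ℝ) :
    θmin * (x ⬝ᵥ x) ≤ x ⬝ᵥ (G.adjMatrix ℝ *ᵥ x) := by
  classical
  set A := G.adjMatrix ℝ with hA_def
  have hA : A.IsHermitian := by
    unfold Matrix.IsHermitian
    ext i j
    simp [A, Matrix.conjTranspose_apply, SimpleGraph.adjMatrix_apply, G.adj_comm]
  set M := A - θmin • (1 : Matrix V V ℝ) with hM_def
  have hM : M.IsHermitian := hA.sub (by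
    rw [Matrix.IsHermitian, Matrix.conjTranspose_smul, Matrix.conjTranspose_one, star_trivial])
  have hpsd : M.PosSemidef := by
    apply hM.posSemidef_iff_eigenvalues_nonneg.mpr
    intro i
    have hf := hM.mulVec_eigenvectorBasis i
    set f : V → ℝ := ⇑(hM.eigenvectorBasis i) with hf_def
    have hf0 : f ≠ 0 := by
      intro h
      have h1 : hM.eigenvectorBasis i = 0 := by
        ext v
        exact congrFun h v
      have := hM.eigenvectorBasis.orthonormal.1 i
      rw [h1] at this
      simp at this
    have hMf : M *ᵥ f = A *ᵥ f - θmin • f := by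
      rw [hM_def, Matrix.sub_mulVec, Matrix.smul_mulVec, Matrix.one_mulVec]
    have hAf : A *ᵥ f = (hM.eigenvalues i + θmin) • f := by
      have : A *ᵥ f - θmin • f = hM.eigenvalues i • f := by rw [← hMf]; exact hf
      have h2 : A *ᵥ f = hM.eigenvalues i • f + θmin • f := by
        rw [← this]; abel
      rw [h2, ← add_smul]
    have := hmin _ ⟨f, hf0, hAf⟩
    simp only [Pi.zero_apply]; linarith
  have h0 := hpsd.dotProduct_mulVec_nonneg x
  have hst : star x = x := rfl
  rw [hst] at h0
  have hMx : M *ᵥ x = A *ᵥ x - θmin • x := by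
    rw [hM_def, Matrix.sub_mulVec, Matrix.smul_mulVec, Matrix.one_mulVec]
  rw [hMx, dotProduct_sub, dotProduct_smul] at h0
  simp only [smul_eq_mul] at h0
  linarith

/-- For a finite `k`-regular graph (`k ≥ 1`) on `2t+1` vertices (`t ≥ 1`) with smallest
adjacency eigenvalue `θmin`, one has `h_G ≤ (t+1)·(k - θmin)/((2t+1)·k)`. -/
theorem stmt_3 {V : Type} [Fintype V] [DecidableEq V] (G : SimpleGraph V) [DecidableRel G.Adj]
    (k t : ℕ) (hk : 1 ≤ k) (ht : 1 ≤ t) (hcard : Fintype.card V = 2 * t + 1)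
    (hreg : G.IsRegularOfDegree k)
    (θmin : ℝ) (hθ : IsAdjEigenvalue G θmin)
    (hmin : ∀ μ : ℝ, IsAdjEigenvalue G μ → θmin ≤ μ) :
    cheeger G k ≤ ((t : ℝ) + 1) * ((k : ℝ) - θmin) / ((2 * (t : ℝ) + 1) * (k : ℝ)) := by
  classical
  set A := G.adjMatrix ℝ with hA_def
  -- eB as a double sum of matrix entries
  have eB_eq : ∀ S T : Finset V, (eB G S T : ℝ) = ∑ u ∈ S, ∑ v ∈ T, A u v := by
    intro S T
    rw [eB, Finset.card_filter]
    push_cast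
    rw [Finset.sum_product]
    simp [A, SimpleGraph.adjMatrix_apply]
  -- row sums are k
  have row : ∀ u : V, ∑ v, A u v = (k : ℝ) := by
    intro u
    have : ∑ v, A u v = ((Finset.univ.filter (G.Adj u)).card : ℝ) := by
      simp [A, SimpleGraph.adjMatrix_apply]
    rw [this, ← SimpleGraph.neighborFinset_eq_filter, SimpleGraph.card_neighborFinset_eq_degree,
      hreg u]
  -- pick a set of size t
  obtain ⟨S, -, hScard⟩ := Finset.exists_subset_card_eq (s := (Finset.univ : Finset V)) (n := t)
    (by rw [Finset.card_univ, hcard]; omega)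
  have hSccard : Sᶜ.card = t + 1 := by
    rw [Finset.card_compl, hScard, hcard]; omega
  set a : ℝ := (eB G S S : ℝ) with ha_def
  set b : ℝ := (eB G S Sᶜ : ℝ) with hb_def
  set b' : ℝ := (eB G Sᶜ S : ℝ) with hb'_def
  set c : ℝ := (eB G Sᶜ Sᶜ : ℝ) with hc_def
  set x : V → ℝ := fun v => if v ∈ S then (t : ℝ) + 1 else -(t : ℝ) with hx_def
  -- quadratic form
  have inner : ∀ u, (∑ v, A u v * x v)
      = ((t : ℝ) + 1) * ∑ v ∈ S, A u v + (-(t : ℝ)) * ∑ v ∈ Sᶜ, A u v := by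
    intro u
    rw [← Finset.sum_add_sum_compl S (fun v => A u v * x v), Finset.mul_sum, Finset.mul_sum]
    congr 1
    · apply Finset.sum_congr rfl; intro v hv; simp [x, hv]; try ring
    · apply Finset.sum_congr rfl; intro v hv
      rw [Finset.mem_compl] at hv; simp [x, hv]; try ring
  have key : x ⬝ᵥ (A *ᵥ x)
      = ((t : ℝ) + 1) ^ 2 * a + (-(t : ℝ)) * ((t : ℝ) + 1) * (b + b')
        + (t : ℝ) ^ 2 * c := by
    have step1 : x ⬝ᵥ (A *ᵥ x) = ∑ u, x u *
        (((t : ℝ) + 1) * ∑ v ∈ S, A u v + (-(t : ℝ)) * ∑ v ∈ Sᶜ, A u v) := by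
      simp only [dotProduct, Matrix.mulVec, dotProduct]
      exact Finset.sum_congr rfl fun u _ => by rw [inner u]
    rw [step1, ← Finset.sum_add_sum_compl S]
    have e1 : ∑ u ∈ S, x u *
        (((t : ℝ) + 1) * ∑ v ∈ S, A u v + (-(t : ℝ)) * ∑ v ∈ Sᶜ, A u v)
        = ((t : ℝ) + 1) ^ 2 * (∑ u ∈ S, ∑ v ∈ S, A u v)
          + ((t : ℝ) + 1) * (-(t : ℝ)) * (∑ u ∈ S, ∑ v ∈ Sᶜ, A u v) := by
      rw [Finset.mul_sum, Finset.mul_sum, ← Finset.sum_add_distrib]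
      apply Finset.sum_congr rfl; intro u hu; simp [x, hu]; try ring
    have e2 : ∑ u ∈ Sᶜ, x u *
        (((t : ℝ) + 1) * ∑ v ∈ S, A u v + (-(t : ℝ)) * ∑ v ∈ Sᶜ, A u v)
        = (-(t : ℝ)) * ((t : ℝ) + 1) * (∑ u ∈ Sᶜ, ∑ v ∈ S, A u v)
          + (t : ℝ) ^ 2 * (∑ u ∈ Sᶜ, ∑ v ∈ Sᶜ, A u v) := by
      rw [Finset.mul_sum, Finset.mul_sum, ← Finset.sum_add_distrib]
      apply Finset.sum_congr rfl; intro u hu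
      rw [Finset.mem_compl] at hu; simp [x, hu]; try ring
    rw [e1, e2, ← eB_eq, ← eB_eq, ← eB_eq, ← eB_eq, ← ha_def, ← hb_def, ← hb'_def, ← hc_def]
    ring
  -- norm
  have hxx : x ⬝ᵥ x = (t : ℝ) * ((t : ℝ) + 1) ^ 2 + ((t : ℝ) + 1) * (t : ℝ) ^ 2 := by
    simp only [dotProduct]
    rw [← Finset.sum_add_sum_compl S]
    have e1 : ∑ u ∈ S, x u * x u = (t : ℝ) * ((t : ℝ) + 1) ^ 2 := by
      rw [Finset.sum_congr rfl (fun u hu => by simp [x, hu]; try ring :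
        ∀ u ∈ S, x u * x u = ((t : ℝ) + 1) ^ 2), Finset.sum_const, hScard]
      simp; try ring
    have e2 : ∑ u ∈ Sᶜ, x u * x u = ((t : ℝ) + 1) * (t : ℝ) ^ 2 := by
      rw [Finset.sum_congr rfl (fun u hu => by
        rw [Finset.mem_compl] at hu; simp [x, hu]; try ring :
        ∀ u ∈ Sᶜ, x u * x u = (t : ℝ) ^ 2), Finset.sum_const, hSccard]
      simp; try ring
    rw [e1, e2]
  -- degree identities
  have h1 : a + b = (k : ℝ) * t := by
    rw [ha_def, hb_def, eB_eq, eB_eq, ← Finset.sum_add_distrib]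
    rw [Finset.sum_congr rfl (fun u _ => by
      rw [Finset.sum_add_sum_compl, row u] :
      ∀ u ∈ S, (∑ v ∈ S, A u v + ∑ v ∈ Sᶜ, A u v) = (k : ℝ)), Finset.sum_const, hScard]
    simp [mul_comm]
  have h2 : b' + c = (k : ℝ) * ((t : ℝ) + 1) := by
    rw [hb'_def, hc_def, eB_eq, eB_eq, ← Finset.sum_add_distrib]
    rw [Finset.sum_congr rfl (fun u _ => by
      rw [Finset.sum_add_sum_compl, row u] :
      ∀ u ∈ Sᶜ, (∑ v ∈ S, A u v + ∑ v ∈ Sᶜ, A u v) = (k : ℝ)), Finset.sum_const, hSccard]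
    push_cast
    ring
  have hbb : b = b' := by
    rw [hb_def, hb'_def, eB_eq, eB_eq, Finset.sum_comm (f := fun u v => A u v)]
    apply Finset.sum_congr rfl; intro u _
    apply Finset.sum_congr rfl; intro v _
    simp [A, SimpleGraph.adjMatrix_apply, G.adj_comm]
  -- Rayleigh bound
  have hray := rayleigh_lower G θmin hmin x
  rw [← hA_def, key, hxx] at hray
  have ha : a = (k : ℝ) * t - b := by linarith
  have hc : c = (k : ℝ) * ((t : ℝ) + 1) - b := by rw [hbb]; linarith
  rw [ha, hc, ← hbb] at hray
  have ht1 : (0 : ℝ) < 2 * (t : ℝ) + 1 := by positivity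
  have h3 : b * (2 * (t : ℝ) + 1) * (2 * (t : ℝ) + 1)
      ≤ ((k : ℝ) - θmin) * t * ((t : ℝ) + 1) * (2 * (t : ℝ) + 1) := by nlinarith [hray]
  have h4 : b * (2 * (t : ℝ) + 1) ≤ ((k : ℝ) - θmin) * t * ((t : ℝ) + 1) :=
    le_of_mul_le_mul_right h3 ht1
  -- conclude
  have hk0 : (0 : ℝ) < (k : ℝ) := by exact_mod_cast hk
  have ht0 : (0 : ℝ) < (t : ℝ) := by exact_mod_cast ht
  have hbdd : BddBelow {x : ℝ | ∃ S : Finset V, S.Nonempty ∧ 2 * S.card ≤ Fintype.card V ∧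
      x = (eB G S Sᶜ : ℝ) / (k * S.card)} := by
    refine ⟨0, ?_⟩
    rintro y ⟨T, -, -, rfl⟩
    positivity
  have hmem : b / ((k : ℝ) * (t : ℝ)) ∈ {x : ℝ | ∃ S : Finset V, S.Nonempty ∧
      2 * S.card ≤ Fintype.card V ∧ x = (eB G S Sᶜ : ℝ) / (k * S.card)} := by
    refine ⟨S, ?_, ?_, ?_⟩
    · rw [← Finset.card_pos, hScard]; omega
    · rw [hScard, hcard]; omega
    · rw [hScard, ← hb_def]
  have hle : cheeger G k ≤ b / ((k : ℝ) * (t : ℝ)) := csInf_le hbdd hmem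
  refine hle.trans ?_
  rw [div_le_div_iff₀ (by positivity) (by positivity)]
  nlinarith [mul_le_mul_of_nonneg_right h4 hk0.le]
end

section
/- Let G be a finite connected bipartite k-regular simple graph (k ≥ 1) on 2r vertices, where r = 2m + 1 is odd with m ≥ 1. Then h_G ≤ 1/2 + 1/(2r²). -/
open Finset Matrix

section Aux
variable {V : Type} [Fintype V] [DecidableEq V] (G : SimpleGraph V) [DecidableRel G.Adj]

lemma eB_eq_sum (S T : Finset V) : eB G S T = ∑ x ∈ S, (T.filter (G.Adj x)).card := by
  unfold eB
  rw [Finset.card_filter, Finset.sum_product]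
  simp only [Finset.card_filter]

lemma eB_symm (S T : Finset V) : eB G S T = eB G T S := by
  unfold eB
  apply Finset.card_bij (fun p _ => p.swap)
  · intro p hp; simp at hp ⊢; exact ⟨⟨hp.1.2, hp.1.1⟩, hp.2.symm⟩
  · intro p _ q _ h; exact Prod.swap_injective h
  · intro p hp; exact ⟨p.swap, by simp at hp ⊢; exact ⟨⟨hp.1.2, hp.1.1⟩, hp.2.symm⟩, by simp⟩

lemma count_mem_aux (s : Finset V) (a : V) (ha : a ∈ s) (n : ℕ) :
    ((s.powersetCard (n+1)).filter (fun t => a ∈ t)).card = (s.card - 1).choose n := by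
  have key : ((s.powersetCard (n+1)).filter (fun t => a ∈ t)).card
      = ((s.erase a).powersetCard n).card := by
    refine Finset.card_bij' (fun t _ => t.erase a) (fun u _ => insert a u) ?hi ?hj ?li ?ri
    case hi =>
      intro t ht; simp only [Finset.mem_filter, Finset.mem_powersetCard] at ht
      rw [Finset.mem_powersetCard]
      constructor
      · exact fun x hx => Finset.mem_erase.2 ⟨(Finset.mem_erase.1 hx).1, ht.1.1 (Finset.mem_erase.1 hx).2⟩
      · rw [Finset.card_erase_of_mem ht.2, ht.1.2]; rfl
    case hj =>
      intro u hu; rw [Finset.mem_powersetCard] at hu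
      have ha' : a ∉ u := fun h => (Finset.mem_erase.1 (hu.1 h)).1 rfl
      simp only [Finset.mem_filter, Finset.mem_powersetCard]
      refine ⟨⟨fun x hx => ?_, ?_⟩, ?_⟩
      · rcases Finset.mem_insert.1 hx with h | h
        · exact h ▸ ha
        · exact Finset.erase_subset _ _ (hu.1 h)
      · rw [Finset.card_insert_of_notMem ha', hu.2]
      · exact Finset.mem_insert_self a u
    case li =>
      intro t ht; simp only [Finset.mem_filter] at ht; exact Finset.insert_erase ht.2
    case ri =>
      intro u hu; rw [Finset.mem_powersetCard] at hu
      have ha' : a ∉ u := fun h => (Finset.mem_erase.1 (hu.1 h)).1 rfl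
      exact Finset.erase_insert ha'
  rw [key, Finset.card_powersetCard, Finset.card_erase_of_mem ha]

end Aux

set_option maxHeartbeats 1000000 in
/-- A finite connected bipartite `k`-regular graph (`k ≥ 1`) on `2r` vertices with
`r = 2m + 1` odd (`m ≥ 1`) satisfies `h_G ≤ 1/2 + 1/(2r²)`. -/
theorem stmt_5 {V : Type} [Fintype V] [DecidableEq V] (G : SimpleGraph V) [DecidableRel G.Adj]
    (k r m : ℕ) (hk : 1 ≤ k) (hm : 1 ≤ m) (hr : r = 2 * m + 1)
    (hcard : Fintype.card V = 2 * r)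
    (hconn : G.Connected) (hreg : G.IsRegularOfDegree k)
    (hbip : ∃ A : Set V, ∀ x y : V, G.Adj x y → (x ∈ A ↔ y ∉ A)) :
    cheeger G k ≤ 1 / 2 + 1 / (2 * (r : ℝ) ^ 2) := by
  classical
  obtain ⟨A, hA⟩ := hbip
  obtain ⟨m', rfl⟩ : ∃ m', m = m' + 1 := ⟨m - 1, (Nat.succ_pred_eq_of_pos hm).symm⟩
  set m := m' + 1 with hm'def
  set A' : Finset V := univ.filter (fun x => x ∈ A) with hA'def
  have hApart : ∀ x y : V, G.Adj x y → (x ∈ A' ↔ y ∉ A') := by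
    intro x y hxy
    simp only [hA'def, Finset.mem_filter, Finset.mem_univ, true_and]
    exact hA x y hxy
  have hdeg : ∀ x : V, (univ.filter (G.Adj x)).card = k := by
    intro x
    rw [← SimpleGraph.neighborFinset_eq_filter]
    exact hreg x
  -- neighbors of a vertex in A' are all in A'ᶜ, and vice versa
  have hfilA : ∀ x ∈ A', A'.filter (G.Adj x) = ∅ := by
    intro x hx
    rw [Finset.filter_eq_empty_iff]
    intro y hy hadj
    exact ((hApart x y hadj).1 hx) hy
  have hfilB : ∀ x ∈ A'ᶜ, A'ᶜ.filter (G.Adj x) = ∅ := by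
    intro x hx
    rw [Finset.filter_eq_empty_iff]
    intro y hy hadj
    rw [Finset.mem_compl] at hx hy
    exact hx ((hApart x y hadj).2 hy)
  -- splitting a degree over S and Sᶜ
  have hfilsplit : ∀ (x : V) (S : Finset V),
      (Sᶜ.filter (G.Adj x)).card + (S.filter (G.Adj x)).card = k := by
    intro x S
    have hu : Sᶜ ∪ S = univ := by rw [Finset.union_comm]; exact Finset.union_compl S
    rw [← Finset.card_union_of_disjoint
      (Finset.disjoint_filter_filter disjoint_compl_left), ← Finset.filter_union, hu, hdeg]
  -- E[S, Sᶜ] + E[S, S] = k |S|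
  have hsplit : ∀ S : Finset V, eB G S Sᶜ + eB G S S = k * S.card := by
    intro S
    rw [eB_eq_sum, eB_eq_sum, ← Finset.sum_add_distrib]
    rw [Finset.sum_congr rfl fun x _ => hfilsplit x S, Finset.sum_const, smul_eq_mul, mul_comm]
  -- the parts have equal size r
  have heA : eB G A' A'ᶜ = k * A'.card := by
    rw [eB_eq_sum]
    have : ∀ x ∈ A', (A'ᶜ.filter (G.Adj x)).card = k := by
      intro x hx
      have := hfilsplit x A'
      rw [hfilA x hx] at this
      simpa using this
    rw [Finset.sum_congr rfl this, Finset.sum_const, smul_eq_mul, mul_comm]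
  have heB : eB G A'ᶜ A' = k * A'ᶜ.card := by
    rw [eB_eq_sum]
    have : ∀ x ∈ A'ᶜ, (A'.filter (G.Adj x)).card = k := by
      intro x hx
      have h2 := hfilsplit x A'ᶜ
      rw [hfilB x hx, compl_compl] at h2
      simpa using h2
    rw [Finset.sum_congr rfl this, Finset.sum_const, smul_eq_mul, mul_comm]
  have hAr : A'.card = r := by
    have h1 : k * A'.card = k * A'ᶜ.card := by rw [← heA, ← heB, eB_symm]
    have h2 : A'.card = A'ᶜ.card := Nat.eq_of_mul_eq_mul_left hk h1
    have h3 : A'ᶜ.card = Fintype.card V - A'.card := Finset.card_compl A' 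
    omega
  have hAcr : A'ᶜ.card = r := by
    rw [Finset.card_compl]
    omega
  -- the edge set between the parts
  set E : Finset (V × V) := (A' ×ˢ A'ᶜ).filter (fun p => G.Adj p.1 p.2) with hEdef
  have hEcard : E.card = k * r := by
    have : E.card = eB G A' A'ᶜ := rfl
    rw [this, heA, hAr]
  -- the family of candidate pairs
  set T : Finset (Finset V × Finset V) := (A'.powersetCard (m+1)) ×ˢ (A'ᶜ.powersetCard m)
    with hTdef
  have hTcard : T.card = r.choose (m+1) * r.choose m := by
    rw [hTdef, Finset.card_product, Finset.card_powersetCard, Finset.card_powersetCard, hAr, hAcr]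
  have hTne : T.Nonempty := by
    rw [hTdef]
    apply Finset.Nonempty.product
    · exact Finset.powersetCard_nonempty.2 (by rw [hAr]; omega)
    · exact Finset.powersetCard_nonempty.2 (by rw [hAcr]; omega)
  -- rewrite each eB over the edge set
  have hper : ∀ p ∈ T, eB G p.1 p.2
      = ∑ q ∈ E, (if q.1 ∈ p.1 ∧ q.2 ∈ p.2 then 1 else 0) := by
    intro p hp
    rw [hTdef, Finset.mem_product, Finset.mem_powersetCard, Finset.mem_powersetCard] at hp
    have : E.filter (fun q => q.1 ∈ p.1 ∧ q.2 ∈ p.2) = (p.1 ×ˢ p.2).filter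
        (fun q => G.Adj q.1 q.2) := by
      ext q
      simp only [hEdef, Finset.mem_filter, Finset.mem_product]
      constructor
      · rintro ⟨⟨_, hadj⟩, h1, h2⟩; exact ⟨⟨h1, h2⟩, hadj⟩
      · rintro ⟨⟨h1, h2⟩, hadj⟩; exact ⟨⟨⟨hp.1.1 h1, hp.2.1 h2⟩, hadj⟩, h1, h2⟩
    rw [← Finset.card_filter, this]
    rfl
  -- total count
  have hsum : ∑ p ∈ T, eB G p.1 p.2 = (k * r) * ((2*m).choose m * (2*m).choose m') := by
    rw [Finset.sum_congr rfl hper, Finset.sum_comm]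
    have hq : ∀ q ∈ E, (∑ p ∈ T, if q.1 ∈ p.1 ∧ q.2 ∈ p.2 then 1 else 0)
        = (2*m).choose m * (2*m).choose m' := by
      intro q hq
      rw [hEdef, Finset.mem_filter, Finset.mem_product] at hq
      rw [← Finset.card_filter, hTdef,
        Finset.filter_product (fun t => q.1 ∈ t) (fun t => q.2 ∈ t), Finset.card_product]
      rw [count_mem_aux A' q.1 hq.1.1 m]
      have hmm : m = m' + 1 := rfl
      rw [hmm, count_mem_aux A'ᶜ q.2 hq.1.2 m', hAr, hAcr]
      have : r - 1 = 2 * m := by omega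
      rw [this]
    rw [Finset.sum_congr rfl hq, Finset.sum_const, smul_eq_mul, hEcard]
  -- pick a good pair
  obtain ⟨p, hp, hineq⟩ : ∃ p ∈ T,
      (k * r) * ((2*m).choose m * (2*m).choose m') ≤ T.card * eB G p.1 p.2 := by
    apply Finset.exists_le_of_sum_le hTne
    rw [Finset.sum_const, smul_eq_mul, ← Finset.mul_sum, hsum]
  -- unpack the good pair
  rw [hTdef, Finset.mem_product, Finset.mem_powersetCard, Finset.mem_powersetCard] at hp
  obtain ⟨⟨hs1, hc1⟩, hs2, hc2⟩ := hp
  set e := eB G p.1 p.2 with hedef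
  -- natural number inequality: k*(m+1)*m ≤ e*r
  have hN : 0 < r.choose (m+1) * r.choose m :=
    Nat.mul_pos (Nat.choose_pos (by omega)) (Nat.choose_pos (by omega))
  have h1 : r * (2*m).choose m = r.choose (m+1) * (m+1) := by
    rw [hr]; exact Nat.add_one_mul_choose_eq (2*m) m
  have h2 : r * (2*m).choose m' = r.choose m * m := by
    rw [hr, hm'def]; exact Nat.add_one_mul_choose_eq (2*m) m'
  have hmul : (r.choose (m+1) * r.choose m) * (k * ((m+1)*m))
      ≤ (r.choose (m+1) * r.choose m) * (e * r) := by
    calc (r.choose (m+1) * r.choose m) * (k*((m+1)*m))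
        = k * ((r.choose (m+1)*(m+1)) * (r.choose m * m)) := by ring
      _ = k * ((r * (2*m).choose m) * (r * (2*m).choose m')) := by rw [h1, h2]
      _ = (k * r * ((2*m).choose m * (2*m).choose m')) * r := by ring
      _ ≤ (T.card * e) * r := Nat.mul_le_mul_right r hineq
      _ = (r.choose (m+1) * r.choose m) * (e * r) := by rw [hTcard]; ring
  have hkey : k * ((m+1)*m) ≤ e * r := Nat.le_of_mul_le_mul_left hmul hN
  -- the cut set S
  set S : Finset V := p.1 ∪ p.2 with hSdef
  have hdisj : Disjoint p.1 p.2 := Finset.disjoint_left.2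
    fun x h1 h2 => (Finset.mem_compl.1 (hs2 h2)) (hs1 h1)
  have hScard : S.card = r := by
    rw [hSdef, Finset.card_union_of_disjoint hdisj, hc1, hc2]; omega
  have hSne : S.Nonempty := by
    obtain ⟨x, hx⟩ := Finset.card_pos.mp (show 0 < p.1.card by omega)
    exact ⟨x, Finset.mem_union_left _ hx⟩
  -- E[S,S] = 2e
  have heSS : eB G S S = 2 * e := by
    rw [eB_eq_sum, hSdef, Finset.sum_union hdisj]
    have hx1 : ∀ x ∈ p.1, ((p.1 ∪ p.2).filter (G.Adj x)).card = (p.2.filter (G.Adj x)).card := by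
      intro x hx
      have hempty : p.1.filter (G.Adj x) = ∅ := Finset.subset_empty.1
        (hfilA x (hs1 hx) ▸ Finset.filter_subset_filter _ hs1)
      rw [Finset.filter_union, hempty, Finset.empty_union]
    have hx2 : ∀ x ∈ p.2, ((p.1 ∪ p.2).filter (G.Adj x)).card = (p.1.filter (G.Adj x)).card := by
      intro x hx
      have hempty : p.2.filter (G.Adj x) = ∅ := Finset.subset_empty.1
        (hfilB x (hs2 hx) ▸ Finset.filter_subset_filter _ hs2)
      rw [Finset.filter_union, hempty, Finset.union_empty]
    rw [Finset.sum_congr rfl hx1, Finset.sum_congr rfl hx2,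
      ← eB_eq_sum, ← eB_eq_sum, eB_symm G p.2 p.1, hedef]
    ring
  have heScut : eB G S Sᶜ + 2 * e = k * r := by
    have := hsplit S
    rw [heSS, hScard] at this
    exact this
  -- pass to the infimum
  have hbdd : BddBelow {x : ℝ | ∃ S : Finset V, S.Nonempty ∧ 2 * S.card ≤ Fintype.card V ∧
      x = (eB G S Sᶜ : ℝ) / (k * S.card)} := by
    refine ⟨0, fun x hx => ?_⟩
    obtain ⟨S', _, _, rfl⟩ := hx
    positivity
  have hmem : ((eB G S Sᶜ : ℝ) / (k * S.card)) ∈ {x : ℝ | ∃ S : Finset V, S.Nonempty ∧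
      2 * S.card ≤ Fintype.card V ∧ x = (eB G S Sᶜ : ℝ) / (k * S.card)} :=
    ⟨S, hSne, by omega, rfl⟩
  refine le_trans (csInf_le hbdd hmem) ?_
  -- final real arithmetic
  have hrpos : (0:ℝ) < r := by
    have : 0 < r := by omega
    exact_mod_cast this
  have hkpos : (0:ℝ) < k := by exact_mod_cast hk
  have hcast : (eB G S Sᶜ : ℝ) = k*r - 2*e := by
    have := heScut
    have h' : ((eB G S Sᶜ : ℕ) : ℝ) + 2*e = k*r := by exact_mod_cast this
    linarith
  have hecast : (k:ℝ) * (((m:ℕ)+1)*m) ≤ (e:ℝ) * r := by exact_mod_cast hkey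
  have hrcast : (r:ℝ) = 2*(m:ℕ)+1 := by exact_mod_cast hr
  rw [hScard, hcast, div_le_iff₀ (by positivity)]
  have hRHS : (1/2 + 1/(2*(r:ℝ)^2))*((k:ℝ)*r) = ((k:ℝ)*r^2 + k)/(2*r) := by
    field_simp
  rw [hRHS, le_div_iff₀ (by positivity)]
  have hq : (k:ℝ)*(r:ℝ)^2 = 4*(k:ℝ)*(((m:ℕ):ℝ)+1)*((m:ℕ):ℝ) + k := by rw [hrcast]; ring
  nlinarith [hecast, hq, hkpos, hrpos]
end

section
/- Let G be a finite connected conference graph, i.e. a strongly regular graph with parameters (v, (v−1)/2, (v−5)/4, (v−1)/4), where v ≥ 5 and v ≡ 1 (mod 4). Then h_G ≤ (v − √v)/(v − 1). (Here (v − √v)/(v−1) equals λ1 = (k − θ1)/k, since the second-largest adjacency eigenvalue of a conference graph is θ1 = (√v − 1)/2.) -/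
open Finset Matrix

section Helpers

variable {V : Type} [Fintype V] [DecidableEq V] (G : SimpleGraph V) [DecidableRel G.Adj]

set_option linter.unusedSectionVars false in
lemma eB_sum_aux (S T : Finset V) :
    ((S ×ˢ T).filter fun p => G.Adj p.1 p.2).card
      = ∑ x ∈ S, (T.filter (G.Adj x)).card := by
  rw [Finset.card_filter, Finset.sum_product]
  exact Finset.sum_congr rfl fun x _ => (Finset.card_filter _ _).symm

lemma filter_compl_adj_aux (S : Finset V) (z : V) :
    (Sᶜ.filter (G.Adj z)).card = G.degree z - (G.neighborFinset z ∩ S).card := by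
  have h1 : Sᶜ.filter (G.Adj z) = G.neighborFinset z \ S := by
    ext w; simp [SimpleGraph.mem_neighborFinset, and_comm]
  have h2 := Finset.card_sdiff_add_card_inter (G.neighborFinset z) S
  have h3 : (G.neighborFinset z).card = G.degree z := G.card_neighborFinset_eq_degree z
  rw [h1]; omega

lemma inter_card_common_aux (x y : V) :
    (G.neighborFinset y ∩ G.neighborFinset x).card
      = Fintype.card (G.commonNeighbors y x) := by
  rw [← Set.toFinset_card]
  congr 1
  ext w
  simp [SimpleGraph.mem_commonNeighbors]

end Helpers

/-- A finite connected conference graph, i.e. a strongly regular graph with parameters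
`(v, (v-1)/2, (v-5)/4, (v-1)/4)` where `v ≥ 5` and `v ≡ 1 (mod 4)`, satisfies
`h_G ≤ (v - √v)/(v - 1)`. -/
theorem stmt_8 {V : Type} [Fintype V] [DecidableEq V] (G : SimpleGraph V) [DecidableRel G.Adj]
    (v k a1 c2 : ℕ) (hv5 : 5 ≤ v) (hv4 : v % 4 = 1)
    (hk : 2 * k = v - 1) (ha1 : 4 * a1 = v - 5) (hc2 : 4 * c2 = v - 1)
    (hsrg : G.IsSRGWith v k a1 c2) (hconn : G.Connected) :
    cheeger G k ≤ ((v : ℝ) - Real.sqrt (v : ℝ)) / ((v : ℝ) - 1) := by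
  have hcard : Fintype.card V = v := hsrg.card
  have hreg := hsrg.regular
  have hk2 : 2 ≤ k := by omega
  have hVnonempty : Nonempty V := by
    rw [← Fintype.card_pos_iff]; omega
  obtain ⟨x⟩ := hVnonempty
  have hNx : (G.neighborFinset x).Nonempty := by
    rw [← Finset.card_pos, G.card_neighborFinset_eq_degree, hreg x]; omega
  obtain ⟨y, hy⟩ := hNx
  have hxy : G.Adj x y := (SimpleGraph.mem_neighborFinset _ _ _).mp hy
  have hbdd : BddBelow {r : ℝ | ∃ S : Finset V, S.Nonempty ∧ 2 * S.card ≤ Fintype.card V ∧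
      r = (eB G S Sᶜ : ℝ) / (k * S.card)} := by
    refine ⟨0, ?_⟩
    rintro r ⟨S, -, -, rfl⟩
    positivity
  rcases Nat.lt_or_ge v 9 with hv9 | hv9
  · -- v = 5 case
    have hv : v = 5 := by omega
    have hkval : k = 2 := by omega
    set S : Finset V := {x, y} with hS
    have hne : x ≠ y := G.ne_of_adj hxy
    have hScard : S.card = 2 := Finset.card_pair hne
    have hNxS : G.neighborFinset x ∩ S = {y} := by
      ext w
      simp only [Finset.mem_inter, SimpleGraph.mem_neighborFinset, hS, Finset.mem_insert,
        Finset.mem_singleton]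
      constructor
      · rintro ⟨hadj, rfl | rfl⟩
        · exact absurd hadj (G.irrefl)
        · rfl
      · rintro rfl; exact ⟨hxy, Or.inr rfl⟩
    have hNyS : G.neighborFinset y ∩ S = {x} := by
      ext w
      simp only [Finset.mem_inter, SimpleGraph.mem_neighborFinset, hS, Finset.mem_insert,
        Finset.mem_singleton]
      constructor
      · rintro ⟨hadj, rfl | rfl⟩
        · rfl
        · exact absurd hadj (G.irrefl)
      · rintro rfl; exact ⟨hxy.symm, Or.inl rfl⟩
    have heB : eB G S Sᶜ = 2 := by
      show ((S ×ˢ Sᶜ).filter fun p => G.Adj p.1 p.2).card = 2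
      rw [eB_sum_aux, hS, Finset.sum_pair hne,
        filter_compl_adj_aux, filter_compl_adj_aux, hreg x, hreg y, ← hS, hNxS, hNyS]
      simp [hkval]
    have hmem : ((eB G S Sᶜ : ℝ) / (k * S.card)) ∈ {r : ℝ | ∃ S : Finset V, S.Nonempty ∧
        2 * S.card ≤ Fintype.card V ∧ r = (eB G S Sᶜ : ℝ) / (k * S.card)} := by
      exact ⟨S, ⟨x, by simp [hS]⟩, by omega, rfl⟩
    refine le_trans (csInf_le hbdd hmem) ?_
    rw [heB, hScard, hkval, hv]
    have hs0 : (0:ℝ) ≤ Real.sqrt 5 := Real.sqrt_nonneg _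
    have hs2 : Real.sqrt 5 ^ 2 = 5 := Real.sq_sqrt (by norm_num)
    have hs3 : Real.sqrt 5 ≤ 3 := by nlinarith
    push_cast
    rw [div_le_div_iff₀ (by norm_num) (by norm_num)]
    nlinarith
  · -- v ≥ 9 case: take S = neighborhood of x
    set S : Finset V := G.neighborFinset x with hS
    have hScard : S.card = k := by rw [hS, G.card_neighborFinset_eq_degree, hreg x]
    have ha1k : a1 ≤ k := by omega
    have heB : eB G S Sᶜ = k * (k - a1) := by
      show ((S ×ˢ Sᶜ).filter fun p => G.Adj p.1 p.2).card = k * (k - a1)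
      rw [eB_sum_aux]
      have hterm : ∀ z ∈ S, (Sᶜ.filter (G.Adj z)).card = k - a1 := by
        intro z hz
        have hadj : G.Adj x z := (SimpleGraph.mem_neighborFinset _ _ _).mp hz
        rw [filter_compl_adj_aux, hreg z, hS, inter_card_common_aux,
          hsrg.of_adj z x hadj.symm]
      rw [Finset.sum_congr rfl hterm, Finset.sum_const, hScard, smul_eq_mul]
    have hmem : ((eB G S Sᶜ : ℝ) / (k * S.card)) ∈ {r : ℝ | ∃ S : Finset V, S.Nonempty ∧
        2 * S.card ≤ Fintype.card V ∧ r = (eB G S Sᶜ : ℝ) / (k * S.card)} := by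
      exact ⟨S, ⟨y, hy⟩, by omega, rfl⟩
    refine le_trans (csInf_le hbdd hmem) ?_
    rw [heB, hScard]
    have hs0 : (0:ℝ) ≤ Real.sqrt v := Real.sqrt_nonneg _
    have hs2 : Real.sqrt v ^ 2 = v := Real.sq_sqrt (by positivity)
    have hv9' : (9:ℝ) ≤ v := by exact_mod_cast hv9
    have hs3 : (3:ℝ) ≤ Real.sqrt v := by nlinarith
    have hkcast : 2 * (k:ℝ) = v - 1 := by
      have : (2 * k : ℕ) = v - 1 := hk
      have h1 : ((v - 1 : ℕ) : ℝ) = v - 1 := by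
        rw [Nat.cast_sub (by omega)]; norm_num
      rw [← h1, ← this]; push_cast; ring
    have hacast : 4 * (a1:ℝ) = v - 5 := by
      have h1 : ((v - 5 : ℕ) : ℝ) = v - 5 := by
        rw [Nat.cast_sub (by omega)]; norm_num
      rw [← h1, ← ha1]; push_cast; ring
    have hsub : ((k - a1 : ℕ) : ℝ) = (k:ℝ) - a1 := by
      rw [Nat.cast_sub ha1k]
    have hkpos : (0:ℝ) < k := by positivity
    have hkv : (k:ℝ) = ((v:ℝ) - 1)/2 := by linarith
    have hav : (a1:ℝ) = ((v:ℝ) - 5)/4 := by linarith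
    push_cast [Nat.cast_sub ha1k]
    rw [hkv, hav, div_le_div_iff₀ (by nlinarith) (by nlinarith)]
    nlinarith [mul_nonneg (mul_nonneg (sub_nonneg.mpr hs3) (by linarith : (0:ℝ) ≤ Real.sqrt v + 1)) (by nlinarith : (0:ℝ) ≤ ((v:ℝ)-1)^2)]
end
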